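/- arXiv:2110.10143 — 2 statements merged into one kernel-verified Lean document; each statement's English description precedes it below -/
import Mathlib

section
/- Let G be the threshold graph with creation sequence (0^{k_1}, 1, 0^{k_2}, 1, 0^{k_3}, 1), where k_1, k_2, k_3 ≥ 1. Then q(G) ≤ 4. -/
open Matrix BigOperators

/-- The threshold graph on `Fin n` given by a creation sequence `b`:
for `i < j`, vertices `i` and `j` are adjacent iff `b j = true`. -/
def ThresholdGraph {n : ℕ} (b : Fin n → Bool) : SimpleGraph (Fin n) where
  Adj i j := i ≠ j ∧ ((i < j ∧ b j = true) ∨ (j < i ∧ b i = true))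
  symm := ⟨fun _ _ h => ⟨h.1.symm, h.2.symm⟩⟩
  loopless := ⟨fun _ h => h.1 rfl⟩

/-- The threshold graph whose creation sequence is given by a list of booleans. -/
def thresholdOfList (L : List Bool) : SimpleGraph (Fin L.length) where
  Adj i j := i ≠ j ∧ ((i < j ∧ L.get j = true) ∨ (j < i ∧ L.get i = true))
  symm := ⟨fun _ _ h => ⟨h.1.symm, h.2.symm⟩⟩
  loopless := ⟨fun _ h => h.1 rfl⟩

/-- `S(G)`: real symmetric matrices whose off-diagonal nonzero pattern is given by `G`. -/
def SMat {n : ℕ} (G : SimpleGraph (Fin n)) : Set (Matrix (Fin n) (Fin n) ℝ) :=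
  {A | A.IsSymm ∧ ∀ i j : Fin n, i ≠ j → (A i j ≠ 0 ↔ G.Adj i j)}

/-- The number of distinct (real) eigenvalues of a matrix. -/
noncomputable def numEig {n : ℕ} (A : Matrix (Fin n) (Fin n) ℝ) : ℕ :=
  (spectrum ℝ A).ncard

/-- `q(G)`: the minimum number of distinct eigenvalues over matrices in `S(G)`. -/
noncomputable def qGraph {n : ℕ} (G : SimpleGraph (Fin n)) : ℕ :=
  sInf (numEig '' SMat G)





section Aux

open Polynomial

/-- The fixed 6×6 integer matrix realizing the quotient pattern with
eigenvalues 1, -4096, -15625. -/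
def Mq : Matrix (Fin 6) (Fin 6) ℤ :=
  !![0, 80, 0, 36, 0, 45;
     80, -6399, 0, -2880, 0, -3600;
     0, 0, 0, 80, 0, 36;
     36, -2880, 80, -7695, 0, -4500;
     0, 0, 0, 0, 0, 80;
     45, -3600, 36, -4500, 80, -9720]

theorem Mq_key : (Mq - 1) * ((Mq + 4096) * (Mq + 15625)) = 0 := by decide

theorem Mq_symm : Mqᵀ = Mq := by decide

theorem Mq_patt : ∀ α γ : Fin 6, α < γ → (Mq α γ ≠ 0 ↔ (γ = 1 ∨ γ = 3 ∨ γ = 5)) := by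
  intro α γ; fin_cases α <;> fin_cases γ <;> decide

theorem Mq_diag : ∀ α : Fin 6, α = 0 ∨ α = 2 ∨ α = 4 → Mq α α = 0 := by decide

/-- block index of a position, given breakpoints `a < b < c`. -/
def blk (a b c m : ℕ) : Fin 6 :=
  if m < a then 0 else if m = a then 1 else if m < b then 2
  else if m = b then 3 else if m < c then 4 else 5

section blks
variable {a b c : ℕ} (h1 : a < b) (h2 : b < c)

lemma blk0 (m : ℕ) : blk a b c m = 0 ↔ m < a := by
  unfold blk; split_ifs <;> simp [Fin.ext_iff] <;> omega

lemma blk1 (m : ℕ) : blk a b c m = 1 ↔ m = a := by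
  unfold blk; split_ifs <;> simp [Fin.ext_iff] <;> omega

lemma blk2 (m : ℕ) : blk a b c m = 2 ↔ a < m ∧ m < b := by
  unfold blk; split_ifs <;> simp [Fin.ext_iff] <;> omega

include h1 in
lemma blk3 (m : ℕ) : blk a b c m = 3 ↔ m = b := by
  unfold blk; split_ifs <;> simp [Fin.ext_iff] <;> omega

include h1 in
lemma blk4 (m : ℕ) : blk a b c m = 4 ↔ b < m ∧ m < c := by
  unfold blk; split_ifs <;> simp [Fin.ext_iff] <;> omega

include h1 h2 in
lemma blk5 (m : ℕ) : blk a b c m = 5 ↔ c ≤ m := by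
  unfold blk; split_ifs <;> simp [Fin.ext_iff] <;> omega

include h1 h2 in
lemma blk_mono {m m' : ℕ} (h : m < m') : blk a b c m ≤ blk a b c m' := by
  unfold blk; split_ifs <;> first | rfl | (exact absurd rfl (by omega)) | decide | omega |
    (exfalso; omega)


end blks
end Aux
section Aux2
variable {a b c : ℕ} (h1 : a < b) (h2 : b < c)

include h1 h2 in
lemma patt_main {m m' : ℕ} (h : m < m') (hm' : m' ≤ c) :
    Mq (blk a b c m) (blk a b c m') ≠ 0 ↔ (m' = a ∨ m' = b ∨ m' = c) := by
  have hiff : (blk a b c m' = 1 ∨ blk a b c m' = 3 ∨ blk a b c m' = 5) ↔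
      (m' = a ∨ m' = b ∨ m' = c) := by
    rw [blk1, blk3 h1, blk5 h1 h2]; omega
  rw [← hiff]
  rcases lt_or_eq_of_le (blk_mono h1 h2 h) with hlt | heq
  · exact Mq_patt _ _ hlt
  · have hodd_false : ¬ (blk a b c m' = 1 ∨ blk a b c m' = 3 ∨ blk a b c m' = 5) := by
      rintro (h0|h0|h0)
      · have hm := (blk1 (a := a) (b := b) (c := c) m).mp (heq.trans h0)
        have := (blk1 (a := a) (b := b) (c := c) m').mp h0; omega
      · have hm := (blk3 h1 m).mp (heq.trans h0)
        have := (blk3 h1 m').mp h0; omega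
      · have hm := (blk5 h1 h2 m).mp (heq.trans h0); omega
    have heven : blk a b c m' = 0 ∨ blk a b c m' = 2 ∨ blk a b c m' = 4 := by
      have : ∀ x : Fin 6, ¬(x = 1 ∨ x = 3 ∨ x = 5) → (x = 0 ∨ x = 2 ∨ x = 4) := by decide
      exact this _ hodd_false
    simp only [hodd_false, iff_false, ne_eq, not_not]
    rw [heq]; exact Mq_diag _ heven

include h1 h2 in
lemma card_blk (γ : Fin 6) :
    ((Finset.range (c+1)).filter (fun m => blk a b c m = γ)).card =
      ![a, 1, b - a - 1, 1, c - b - 1, 1] γ := by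
  fin_cases γ
  · show (Finset.filter (fun m => blk a b c m = 0) (Finset.range (c+1))).card = a
    rw [show Finset.filter (fun m => blk a b c m = 0) (Finset.range (c+1)) = Finset.range a by
      ext m; simp only [Finset.mem_filter, Finset.mem_range, blk0]; omega]
    simp
  · show (Finset.filter (fun m => blk a b c m = 1) (Finset.range (c+1))).card = 1
    rw [show Finset.filter (fun m => blk a b c m = 1) (Finset.range (c+1)) = {a} by
      ext m; simp only [Finset.mem_filter, Finset.mem_range, Finset.mem_singleton, blk1]; omega]
    simp
  · show (Finset.filter (fun m => blk a b c m = 2) (Finset.range (c+1))).card = b - a - 1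
    rw [show Finset.filter (fun m => blk a b c m = 2) (Finset.range (c+1)) = Finset.Ico (a+1) b by
      ext m; simp only [Finset.mem_filter, Finset.mem_range, Finset.mem_Ico, blk2]; omega]
    rw [Nat.card_Ico]; omega
  · show (Finset.filter (fun m => blk a b c m = 3) (Finset.range (c+1))).card = 1
    rw [show Finset.filter (fun m => blk a b c m = 3) (Finset.range (c+1)) = {b} by
      ext m; simp only [Finset.mem_filter, Finset.mem_range, Finset.mem_singleton, blk3 h1]
      omega]
    simp
  · show (Finset.filter (fun m => blk a b c m = 4) (Finset.range (c+1))).card = c - b - 1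
    rw [show Finset.filter (fun m => blk a b c m = 4) (Finset.range (c+1)) = Finset.Ico (b+1) c by
      ext m; simp only [Finset.mem_filter, Finset.mem_range, Finset.mem_Ico, blk4 h1]; omega]
    rw [Nat.card_Ico]; omega
  · show (Finset.filter (fun m => blk a b c m = 5) (Finset.range (c+1))).card = 1
    rw [show Finset.filter (fun m => blk a b c m = 5) (Finset.range (c+1)) = {c} by
      ext m; simp only [Finset.mem_filter, Finset.mem_range, Finset.mem_singleton, blk5 h1 h2]
      omega]
    simp

end Aux2
lemma getL (k₁ k₂ k₃ : ℕ) (m : ℕ)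
    (hm : m < (List.replicate k₁ false ++ [true] ++ List.replicate k₂ false ++ [true] ++
      List.replicate k₃ false ++ [true]).length) :
    ((List.replicate k₁ false ++ [true] ++ List.replicate k₂ false ++ [true] ++
      List.replicate k₃ false ++ [true])[m] = true) ↔
      (m = k₁ ∨ m = k₁ + k₂ + 1 ∨ m = k₁ + k₂ + k₃ + 2) := by
  simp only [List.getElem_append, List.getElem_replicate, List.getElem_singleton,
    List.length_append, List.length_replicate, List.length_cons, List.length_nil] at hm ⊢
  split_ifs <;> simp_all <;> omega

noncomputable def twf (a b c : ℕ) (γ : Fin 6) : ℝ :=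
  (Real.sqrt (![a, 1, b - a - 1, 1, c - b - 1, 1] γ))⁻¹

noncomputable def Vm (a b c n : ℕ) : Matrix (Fin n) (Fin 6) ℝ :=
  Matrix.of fun i γ => if blk a b c i.val = γ then twf a b c γ else 0

noncomputable def MR : Matrix (Fin 6) (Fin 6) ℝ := (Int.castRingHom ℝ).mapMatrix Mq

noncomputable def Am (a b c n : ℕ) : Matrix (Fin n) (Fin n) ℝ :=
  Vm a b c n * MR * (Vm a b c n)ᵀ

section VA
variable {a b c n : ℕ} (ha : 1 ≤ a) (h1 : a + 1 < b) (h2 : b + 1 < c)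

include ha h1 h2 in
lemma sz_pos (γ : Fin 6) : (1:ℕ) ≤ ![a, 1, b - a - 1, 1, c - b - 1, 1] γ := by
  fin_cases γ
  · show (1:ℕ) ≤ a; omega
  · exact le_refl 1
  · show (1:ℕ) ≤ b - a - 1; omega
  · exact le_refl 1
  · show (1:ℕ) ≤ c - b - 1; omega
  · exact le_refl 1

include ha h1 h2 in
lemma twf_pos (γ : Fin 6) : 0 < twf a b c γ := by
  refine inv_pos.mpr (Real.sqrt_pos.mpr ?_)
  exact_mod_cast Nat.lt_of_lt_of_le Nat.zero_lt_one (sz_pos ha h1 h2 γ)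

include ha h1 h2 in
lemma hVV (hn : n = c + 1) : (Vm a b c n)ᵀ * Vm a b c n = 1 := by
  subst hn
  ext γ δ
  rw [Matrix.mul_apply]
  simp only [Matrix.transpose_apply, Vm, Matrix.of_apply]
  by_cases hγδ : γ = δ
  · subst hγδ
    rw [Matrix.one_apply_eq]
    have hterm : ∀ i : Fin (c+1),
        (if blk a b c i.val = γ then twf a b c γ else 0) *
        (if blk a b c i.val = γ then twf a b c γ else 0) =
        (if blk a b c i.val = γ then twf a b c γ * twf a b c γ else 0) := by
      intro i; split_ifs <;> simp
    rw [Finset.sum_congr rfl (fun i _ => hterm i)]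
    rw [Fin.sum_univ_eq_sum_range (fun m => if blk a b c m = γ then twf a b c γ * twf a b c γ else 0)]
    rw [← Finset.sum_filter, Finset.sum_const, card_blk (by omega) (by omega)]
    have hszR : (0:ℝ) < (![a, 1, b - a - 1, 1, c - b - 1, 1] γ : ℕ) := by
      exact_mod_cast Nat.lt_of_lt_of_le Nat.zero_lt_one (sz_pos ha h1 h2 γ)
    have : twf a b c γ * twf a b c γ = ((![a, 1, b - a - 1, 1, c - b - 1, 1] γ : ℕ) : ℝ)⁻¹ := by
      rw [twf, ← mul_inv, Real.mul_self_sqrt hszR.le]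
    rw [this, nsmul_eq_mul, mul_inv_cancel₀ (ne_of_gt hszR)]
  · rw [Matrix.one_apply_ne hγδ]
    apply Finset.sum_eq_zero
    intro i _
    split_ifs with p q <;>
      first
        | exact absurd (p.symm.trans q) hγδ
        | exact mul_zero _
        | exact zero_mul _

lemma hAentry (i j : Fin n) :
    Am a b c n i j = twf a b c (blk a b c i.val) *
      MR (blk a b c i.val) (blk a b c j.val) * twf a b c (blk a b c j.val) := by
  rw [Am, Matrix.mul_apply]
  simp only [Matrix.mul_apply, Vm, Matrix.transpose_apply, Matrix.of_apply, ite_mul, zero_mul,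
    mul_ite, mul_zero]
  simp only [Finset.sum_ite_eq, Finset.mem_univ, if_true]

end VA
section Alg
open Polynomial

lemma conjV_mul {n : ℕ} (V : Matrix (Fin n) (Fin 6) ℝ) (hV : Vᵀ * V = 1)
    (B C : Matrix (Fin 6) (Fin 6) ℝ) :
    (V * B * Vᵀ) * (V * C * Vᵀ) = V * (B * C) * Vᵀ := by
  have h : Vᵀ * (V * (C * Vᵀ)) = C * Vᵀ := by rw [← Matrix.mul_assoc, hV, Matrix.one_mul]
  calc (V * B * Vᵀ) * (V * C * Vᵀ) = V * (B * (Vᵀ * (V * (C * Vᵀ)))) := by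
        simp only [Matrix.mul_assoc]
    _ = V * (B * (C * Vᵀ)) := by rw [h]
    _ = V * (B * C) * Vᵀ := by simp only [Matrix.mul_assoc]

lemma ladderV {n : ℕ} (V : Matrix (Fin n) (Fin 6) ℝ) (hV : Vᵀ * V = 1)
    (B C : Matrix (Fin 6) (Fin 6) ℝ) (r : ℝ) :
    (V * B * Vᵀ) * (V * C * Vᵀ - r • 1) = V * (B * (C - r • 1)) * Vᵀ := by
  simp only [mul_sub, sub_mul, Matrix.mul_sub, Matrix.sub_mul, Matrix.mul_smul, Matrix.smul_mul,
    mul_one, Matrix.mul_one, conjV_mul V hV]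

lemma smul_one_ofNat (r : ℕ) [r.AtLeastTwo] :
    ((OfNat.ofNat r : ℝ) • (1 : Matrix (Fin 6) (Fin 6) ℝ)) = OfNat.ofNat r := by
  rw [← Algebra.algebraMap_eq_smul_one, map_ofNat]

lemma sub_neg_ofNat (Xm : Matrix (Fin 6) (Fin 6) ℝ) (r : ℕ) [r.AtLeastTwo] :
    Xm - (-(OfNat.ofNat r) : ℝ) • 1 = Xm + OfNat.ofNat r := by
  rw [neg_smul, sub_neg_eq_add, smul_one_ofNat]

lemma keyR : (MR - (1:ℝ) • 1) * ((MR - (-4096:ℝ) • 1) * (MR - (-15625:ℝ) • 1)) = 0 := by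
  have h := congrArg (Int.castRingHom ℝ).mapMatrix Mq_key
  simp only [_root_.map_mul, map_sub, map_add, _root_.map_one, map_ofNat, map_zero] at h
  rw [one_smul, sub_neg_ofNat, sub_neg_ofNat]
  exact h

lemma MR_symm : MRᵀ = MR := by
  rw [MR, RingHom.mapMatrix_apply, ← Matrix.transpose_map, Mq_symm]

lemma Am_quartic {a b c n : ℕ} (ha : 1 ≤ a) (h1 : a + 1 < b) (h2 : b + 1 < c)
    (hn : n = c + 1) :
    Am a b c n * (Am a b c n - (1:ℝ) • 1) * (Am a b c n - (-4096:ℝ) • 1) *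
      (Am a b c n - (-15625:ℝ) • 1) = 0 := by
  have hV := hVV ha h1 h2 hn
  have s1 : Am a b c n * (Am a b c n - (1:ℝ) • 1)
      = Vm a b c n * (MR * (MR - (1:ℝ) • 1)) * (Vm a b c n)ᵀ :=
    ladderV (Vm a b c n) hV MR MR 1
  have s2 : Vm a b c n * (MR * (MR - (1:ℝ) • 1)) * (Vm a b c n)ᵀ * (Am a b c n - (-4096:ℝ) • 1)
      = Vm a b c n * ((MR * (MR - (1:ℝ) • 1)) * (MR - (-4096:ℝ) • 1)) * (Vm a b c n)ᵀ :=
    ladderV (Vm a b c n) hV _ MR _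
  have s3 : Vm a b c n * ((MR * (MR - (1:ℝ) • 1)) * (MR - (-4096:ℝ) • 1)) * (Vm a b c n)ᵀ *
        (Am a b c n - (-15625:ℝ) • 1)
      = Vm a b c n * (((MR * (MR - (1:ℝ) • 1)) * (MR - (-4096:ℝ) • 1)) * (MR - (-15625:ℝ) • 1)) *
        (Vm a b c n)ᵀ :=
    ladderV (Vm a b c n) hV _ MR _
  rw [s1, s2, s3]
  have hz : ((MR * (MR - (1:ℝ) • 1)) * (MR - (-4096:ℝ) • 1)) * (MR - (-15625:ℝ) • 1) = 0 := by
    calc ((MR * (MR - (1:ℝ) • 1)) * (MR - (-4096:ℝ) • 1)) * (MR - (-15625:ℝ) • 1)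
        = MR * ((MR - (1:ℝ) • 1) * ((MR - (-4096:ℝ) • 1) * (MR - (-15625:ℝ) • 1))) := by
          simp only [Matrix.mul_assoc]
      _ = 0 := by rw [keyR, mul_zero]
  rw [hz, Matrix.mul_zero, Matrix.zero_mul]

lemma spec_quartic {n : ℕ} (hn : 0 < n) (A : Matrix (Fin n) (Fin n) ℝ) (r1 r2 r3 : ℝ)
    (h : A * (A - r1 • 1) * (A - r2 • 1) * (A - r3 • 1) = 0) :
    spectrum ℝ A ⊆ {0, r1, r2, r3} := by
  haveI : NeZero n := ⟨by omega⟩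
  intro μ hμ
  set p : ℝ[X] := (X - C 0) * (X - C r1) * (X - C r2) * (X - C r3) with hp
  have ha : Polynomial.aeval A p = 0 := by
    simp only [hp, _root_.map_mul, map_sub, aeval_X, aeval_C, Algebra.algebraMap_eq_smul_one]
    simpa [zero_smul, sub_zero] using h
  have hs := spectrum.subset_polynomial_aeval A p
  rw [ha] at hs
  have h0 : Polynomial.eval μ p ∈ spectrum ℝ (0 : Matrix (Fin n) (Fin n) ℝ) :=
    hs ⟨μ, hμ, rfl⟩
  rw [spectrum.zero_eq] at h0
  simp only [Set.mem_singleton_iff, hp, Polynomial.eval_mul, Polynomial.eval_sub,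
    Polynomial.eval_X, Polynomial.eval_C] at h0
  have h0' : (μ - 0) * (μ - r1) * (μ - r2) * (μ - r3) = 0 := h0
  rcases mul_eq_zero.mp h0' with h' | h'
  · rcases mul_eq_zero.mp h' with h'' | h''
    · rcases mul_eq_zero.mp h'' with h''' | h'''
      · left; linarith [sub_eq_zero.mp h''']
      · right; left; exact sub_eq_zero.mp h'''
    · right; right; left; exact sub_eq_zero.mp h''
  · right; right; right; exact sub_eq_zero.mp h'

end Alg

/-- For `G ≅ (0^{k_1}, 1, 0^{k_2}, 1, 0^{k_3}, 1)` with
`k_1, k_2, k_3 ≥ 1`, `q(G) ≤ 4`. -/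
theorem stmt14 (k₁ k₂ k₃ : ℕ) (hk₁ : 1 ≤ k₁) (hk₂ : 1 ≤ k₂) (hk₃ : 1 ≤ k₃) :
    qGraph (thresholdOfList (List.replicate k₁ false ++ [true] ++
      List.replicate k₂ false ++ [true] ++ List.replicate k₃ false ++ [true])) ≤ 4 := by
  set L : List Bool := List.replicate k₁ false ++ [true] ++ List.replicate k₂ false ++ [true] ++
    List.replicate k₃ false ++ [true] with hL
  have hlen : L.length = k₁ + k₂ + k₃ + 3 := by
    rw [hL]; simp [List.length_append, List.length_replicate]; omega
  set a := k₁ with hadef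
  set b := k₁ + k₂ + 1 with hbdef
  set c := k₁ + k₂ + k₃ + 2 with hcdef
  have ha : 1 ≤ a := hk₁
  have h1 : a + 1 < b := by omega
  have h2 : b + 1 < c := by omega
  have hn : L.length = c + 1 := by omega
  set A := Am a b c L.length with hA
  have hpos : ∀ γ, 0 < twf a b c γ := twf_pos ha h1 h2
  have hsymmA : A.IsSymm := by
    show Aᵀ = A
    rw [hA, Am, Matrix.transpose_mul, Matrix.transpose_mul, Matrix.transpose_transpose,
      MR_symm, ← Matrix.mul_assoc]
  have hgetL : ∀ m : Fin L.length, (L.get m = true ↔ (m.val = a ∨ m.val = b ∨ m.val = c)) := by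
    intro m
    rw [List.get_eq_getElem]
    exact getL k₁ k₂ k₃ m.val (hL ▸ m.isLt)
  have hne : ∀ i j : Fin L.length,
      (A i j ≠ 0 ↔ Mq (blk a b c i.val) (blk a b c j.val) ≠ 0) := by
    intro i j
    rw [hA, hAentry]
    simp only [MR, RingHom.mapMatrix_apply, Matrix.map_apply, eq_intCast]
    constructor
    · intro h hz; rw [hz] at h; simp at h
    · intro h
      exact mul_ne_zero (mul_ne_zero (hpos _).ne' (by exact_mod_cast h)) (hpos _).ne'
  have hAdj : ∀ i j : Fin L.length, i ≠ j → ((thresholdOfList L).Adj i j ↔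
      ((i < j ∧ L.get j = true) ∨ (j < i ∧ L.get i = true))) := by
    intro i j hij
    exact ⟨fun h => (show _ ∧ _ from h).2, fun h => (show _ ∧ _ from ⟨hij, h⟩)⟩
  have hMqsym : ∀ α γ : Fin 6, Mq α γ = Mq γ α := by
    intro α γ
    conv_lhs => rw [← Mq_symm]
    rfl
  have hpatt : ∀ i j : Fin L.length, i ≠ j → (A i j ≠ 0 ↔ (thresholdOfList L).Adj i j) := by
    intro i j hij
    have hinej : i.val ≠ j.val := fun h => hij (Fin.ext h)
    rw [hne i j, hAdj i j hij]
    rcases lt_or_gt_of_ne hinej with hlt | hgt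
    · have hjc : j.val ≤ c := by have := j.isLt; omega
      have hm := patt_main (show a < b by omega) (show b < c by omega) hlt hjc
      rw [hm, hgetL j]
      constructor
      · intro h; exact Or.inl ⟨Fin.lt_def.mpr hlt, h⟩
      · rintro (⟨_, hT⟩ | ⟨hJI, _⟩)
        · exact hT
        · exact absurd (Fin.lt_def.mp hJI) (by omega)
    · have hic : i.val ≤ c := by have := i.isLt; omega
      have hm := patt_main (show a < b by omega) (show b < c by omega) hgt hic
      rw [hMqsym, hm, hgetL i]
      constructor
      · intro h; exact Or.inr ⟨Fin.lt_def.mpr hgt, h⟩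
      · rintro (⟨hIJ, _⟩ | ⟨_, hT⟩)
        · exact absurd (Fin.lt_def.mp hIJ) (by omega)
        · exact hT
  have hmem : A ∈ SMat (thresholdOfList L) := ⟨hsymmA, hpatt⟩
  have hquart := Am_quartic ha h1 h2 hn
  have hspec : spectrum ℝ A ⊆ {0, 1, -4096, -15625} :=
    spec_quartic (by omega) A 1 (-4096) (-15625) (by rw [hA]; exact hquart)
  have hEig : numEig A ≤ 4 := by
    rw [numEig]
    have hfin : ({0, 1, -4096, -15625} : Set ℝ).Finite :=
      (((Set.finite_singleton (-15625:ℝ)).insert (-4096)).insert 1).insert 0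
    have hle := Set.ncard_le_ncard hspec hfin
    have h3 : ({-15625} : Set ℝ).ncard = 1 := Set.ncard_singleton _
    have c2 := Set.ncard_insert_le (-4096:ℝ) ({-15625} : Set ℝ)
    have c1 := Set.ncard_insert_le (1:ℝ) ({-4096, -15625} : Set ℝ)
    have c0 := Set.ncard_insert_le (0:ℝ) ({1, -4096, -15625} : Set ℝ)
    omega
  exact le_trans (Nat.sInf_le ⟨A, hmem, rfl⟩) hEig
end

section
/- Let n ≥ 5 and let G be the graph on n vertices consisting of a cycle of length four together with n − 4 additional vertices, each adjacent to one fixed vertex of the cycle and to no other vertex (i.e., a 4-cycle with n − 4 pendant vertices attached to a single cycle vertex). Then q(G) = 3. -/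
open Matrix BigOperators

/-- Asymmetric edge relation (on natural-number labels) for the graph consisting of a
4-cycle on vertices `0,1,2,3` together with pendant vertices `4,…,n-1`, each adjacent
only to the fixed cycle vertex `0`. -/
def cyclePendantRel (a b : ℕ) : Prop :=
  (a = 0 ∧ b = 1) ∨ (a = 1 ∧ b = 2) ∨ (a = 2 ∧ b = 3) ∨ (a = 0 ∧ b = 3) ∨ (a = 0 ∧ 4 ≤ b)

/-- The graph on `n` vertices consisting of a 4-cycle (on `0,1,2,3`) with `n - 4`
pendant vertices all attached to the single cycle vertex `0`. -/
def cycleWithPendants (n : ℕ) : SimpleGraph (Fin n) where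
  Adj i j := cyclePendantRel i.val j.val ∨ cyclePendantRel j.val i.val
  symm := ⟨fun _ _ h => h.symm⟩
  loopless := ⟨fun i h => by
    simp only [cyclePendantRel] at h
    omega⟩

/-- For `n ≥ 5`, the graph consisting of a 4-cycle with `n - 4` pendant
vertices attached to a single cycle vertex satisfies `q(G) = 3`. -/

lemma vmv_mul {n : ℕ} (a b c d : Fin n → ℝ) :
    vecMulVec a b * vecMulVec c d = (b ⬝ᵥ c) • vecMulVec a d := by
  ext i j
  simp only [Matrix.mul_apply, vecMulVec_apply, Matrix.smul_apply, smul_eq_mul, dotProduct,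
    Finset.sum_mul]
  exact Finset.sum_congr rfl fun k _ => by ring

lemma conj_spec {n : ℕ} (U a : Matrix (Fin n) (Fin n) ℝ)
    (h1 : U * star U = 1) (h2 : star U * U = 1) :
    spectrum ℝ (U * a * star U) = spectrum ℝ a :=
  spectrum.units_conjugate (u := ⟨U, star U, h1, h2⟩)

lemma spec_eq {n : ℕ} {A : Matrix (Fin n) (Fin n) ℝ} (hA : A.IsHermitian) :
    spectrum ℝ A = Set.range hA.eigenvalues := by
  conv_lhs => rw [hA.spectral_theorem, Unitary.conjStarAlgAut_apply]
  rw [conj_spec _ _ (Matrix.mem_unitaryGroup_iff.mp hA.eigenvectorUnitary.2)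
      (Matrix.mem_unitaryGroup_iff'.mp hA.eigenvectorUnitary.2),
    spectrum_diagonal, RCLike.ofReal_real_eq_id]
  simp

lemma quad_zero {n : ℕ} {A : Matrix (Fin n) (Fin n) ℝ} (hA : A.IsHermitian) {l m : ℝ}
    (h : ∀ i, hA.eigenvalues i = l ∨ hA.eigenvalues i = m) :
    (A - l • 1) * (A - m • 1) = 0 := by
  set U : Matrix (Fin n) (Fin n) ℝ := (hA.eigenvectorUnitary : Matrix (Fin n) (Fin n) ℝ) with hUdef
  have h1 : U * star U = 1 := Matrix.mem_unitaryGroup_iff.mp hA.eigenvectorUnitary.2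
  have h2 : star U * U = 1 := Matrix.mem_unitaryGroup_iff'.mp hA.eigenvectorUnitary.2
  have key : ∀ c : ℝ, A - c • 1 = U * diagonal (fun i => hA.eigenvalues i - c) * star U := by
    intro c
    have hd : diagonal (fun i => hA.eigenvalues i - c)
        = diagonal (RCLike.ofReal ∘ hA.eigenvalues) - c • (1 : Matrix (Fin n) (Fin n) ℝ) := by
      rw [RCLike.ofReal_real_eq_id]
      ext i j
      rcases eq_or_ne i j with rfl | hij
      · simp [Matrix.diagonal_apply_eq, Matrix.one_apply_eq]
      · simp [Matrix.diagonal_apply_ne _ hij, Matrix.one_apply_ne hij]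
    rw [hd, Matrix.mul_sub, Matrix.sub_mul,
      show U * diagonal (RCLike.ofReal ∘ hA.eigenvalues) * star U = A from hA.spectral_theorem.symm]
    congr 1
    rw [Matrix.mul_smul, Matrix.smul_mul, mul_one, h1]
  have hconj : ∀ D1 D2 : Matrix (Fin n) (Fin n) ℝ,
      U * D1 * star U * (U * D2 * star U) = U * (D1 * D2) * star U := by
    intro D1 D2
    rw [Matrix.mul_assoc (U * D1), Matrix.mul_assoc U D2, ← Matrix.mul_assoc (star U), h2,
      one_mul, ← Matrix.mul_assoc, ← Matrix.mul_assoc, Matrix.mul_assoc U D1 D2]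
  rw [key l, key m, hconj, Matrix.diagonal_mul_diagonal,
    show (fun i => (hA.eigenvalues i - l) * (hA.eigenvalues i - m)) = fun _ => (0:ℝ) from
      funext fun i => by rcases h i with hi | hi <;> rw [hi] <;> ring,
    Matrix.diagonal_zero, Matrix.mul_zero, Matrix.zero_mul]

lemma cwp_adj_iff {n : ℕ} (i j : Fin n) :
    (cycleWithPendants n).Adj i j ↔
      (cyclePendantRel i.val j.val ∨ cyclePendantRel j.val i.val) := Iff.rfl


lemma lower_bound {n : ℕ} (hn : 5 ≤ n) {A : Matrix (Fin n) (Fin n) ℝ}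
    (hA : A ∈ SMat (cycleWithPendants n)) : 3 ≤ numEig A := by
  by_contra hlt
  push_neg at hlt
  have hle2 : numEig A ≤ 2 := by omega
  have hherm : A.IsHermitian := by
    have : Aᴴ = Aᵀ := by ext i j; simp [Matrix.conjTranspose_apply, Matrix.transpose_apply]
    rw [Matrix.IsHermitian, this]
    exact hA.1
  set d := hherm.eigenvalues with hd
  have hspec : spectrum ℝ A = Set.range d := spec_eq hherm
  have hnc : (Set.range d).ncard ≤ 2 := by rw [← hspec]; exact hle2
  -- find l m covering all eigenvalues
  have i0' : Fin n := ⟨0, by omega⟩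
  obtain ⟨l, m, hlm⟩ : ∃ l m : ℝ, ∀ i, d i = l ∨ d i = m := by
    set l := d ⟨0, by omega⟩ with hl
    by_cases hall : ∀ i, d i = l
    · exact ⟨l, l, fun i => Or.inl (hall i)⟩
    push_neg at hall
    obtain ⟨i1, hi1⟩ := hall
    refine ⟨l, d i1, ?_⟩
    by_contra hcon
    push_neg at hcon
    obtain ⟨i2, h2l, h2m⟩ := hcon
    have hsub : ({l, d i1, d i2} : Set ℝ) ⊆ Set.range d := by
      rintro z (rfl | rfl | rfl)
      exacts [⟨_, rfl⟩, ⟨_, rfl⟩, ⟨_, rfl⟩]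
    have h3 : ({l, d i1, d i2} : Set ℝ).ncard = 3 := by
      rw [Set.ncard_insert_of_notMem (by
          simp only [Set.mem_insert_iff, Set.mem_singleton_iff]
          push_neg
          exact ⟨fun h => hi1 h.symm, fun h => h2l h.symm⟩) (Set.toFinite _),
        Set.ncard_pair (fun h => h2m h.symm)]
    have := Set.ncard_le_ncard hsub (Set.finite_range d)
    omega
  have hq := quad_zero hherm hlm
  -- evaluate entry (4,1)
  set i4 : Fin n := ⟨4, by omega⟩
  set i1 : Fin n := ⟨1, by omega⟩
  set i0 : Fin n := ⟨0, by omega⟩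
  have e4 : i4.val = 4 := rfl
  have e1 : i1.val = 1 := rfl
  have e0 : i0.val = 0 := rfl
  have hzero : ∀ i j : Fin n, i ≠ j → ¬ (cycleWithPendants n).Adj i j → A i j = 0 := by
    intro i j hij hadj
    by_contra hne
    exact hadj ((hA.2 i j hij).mp hne)
  have hA41 : A i4 i1 = 0 := by
    refine hzero _ _ (by simp [i4, i1, Fin.ext_iff]) ?_
    rw [cwp_adj_iff]
    simp only [cyclePendantRel]
    omega
  have hent : ((A - l • 1) * (A - m • 1)) i4 i1 = 0 := by rw [hq]; rfl
  rw [Matrix.mul_apply] at hent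
  have hsum : ∑ k, (A - l • (1:Matrix (Fin n) (Fin n) ℝ)) i4 k * (A - m • 1) k i1
      = A i4 i0 * A i0 i1 := by
    rw [Finset.sum_eq_single_of_mem i0 (Finset.mem_univ _)]
    · simp only [Matrix.sub_apply, Matrix.smul_apply, Matrix.one_apply, smul_eq_mul]
      rw [if_neg (show i4 ≠ i0 by simp [i4, i0, Fin.ext_iff]),
        if_neg (show i0 ≠ i1 by simp [i0, i1, Fin.ext_iff])]
      ring
    · intro k _ hk
      have hk0 : k.val ≠ 0 := by
        intro h; exact hk (by simp [i0, Fin.ext_iff, h])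
      simp only [Matrix.sub_apply, Matrix.smul_apply, Matrix.one_apply, smul_eq_mul]
      by_cases hk4 : k = i4
      · subst hk4
        rw [hA41, if_neg (show i4 ≠ i1 by simp [i4, i1, Fin.ext_iff])]
        simp
      · have hAk : A i4 k = 0 := by
          refine hzero _ _ (Ne.symm hk4) ?_
          rw [cwp_adj_iff]
          have : k.val ≠ 4 := fun h => hk4 (by simp [i4, Fin.ext_iff, h])
          simp only [cyclePendantRel]
          omega
        rw [hAk, if_neg (show ¬ i4 = k from fun h => hk4 h.symm)]
        simp
  rw [hsum] at hent
  have h40 : A i4 i0 ≠ 0 := by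
    rw [hA.2 i4 i0 (by simp [i4, i0, Fin.ext_iff]), cwp_adj_iff]
    simp only [cyclePendantRel]
    norm_num
  have h01 : A i0 i1 ≠ 0 := by
    rw [hA.2 i0 i1 (by simp [i0, i1, Fin.ext_iff]), cwp_adj_iff]
    simp only [cyclePendantRel]
    norm_num
  exact (mul_ne_zero h40 h01) hent

-- the four vectors
def cwpU (n : ℕ) : Fin n → ℝ := fun i => if i.val = 0 ∨ i.val = 2 then 0 else 1
def cwpV (n : ℕ) : Fin n → ℝ := fun i => if i.val = 0 then 1 else 0
def cwpX (n : ℕ) : Fin n → ℝ := fun i => if i.val = 1 then -1 else if i.val = 3 then 1 else 0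
def cwpY (n : ℕ) (s : ℝ) : Fin n → ℝ :=
  fun i => if i.val = 2 then s else 0

noncomputable def cwpM (n : ℕ) (s : ℝ) : Matrix (Fin n) (Fin n) ℝ :=
  vecMulVec (cwpU n) (cwpV n) + vecMulVec (cwpV n) (cwpU n)
    + vecMulVec (cwpX n) (cwpY n s) + vecMulVec (cwpY n s) (cwpX n)

lemma cwpM_apply {n : ℕ} (s : ℝ) (i j : Fin n) :
    cwpM n s i j = cwpU n i * cwpV n j + cwpV n i * cwpU n j
      + cwpX n i * cwpY n s j + cwpY n s i * cwpX n j := by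
  simp [cwpM, Matrix.add_apply, vecMulVec_apply]

set_option maxHeartbeats 2000000 in
lemma cwpM_mem {n : ℕ} (hn : 5 ≤ n) {s : ℝ} (hs : s ≠ 0) :
    cwpM n s ∈ SMat (cycleWithPendants n) := by
  constructor
  · rw [Matrix.IsSymm]
    ext i j
    rw [Matrix.transpose_apply, cwpM_apply, cwpM_apply]
    ring
  · intro i j hij
    have hij' : i.val ≠ j.val := fun h => hij (Fin.ext h)
    rw [cwpM_apply, cwp_adj_iff]
    have hi : i.val = 0 ∨ i.val = 1 ∨ i.val = 2 ∨ i.val = 3 ∨ 4 ≤ i.val := by omega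
    have hj : j.val = 0 ∨ j.val = 1 ∨ j.val = 2 ∨ j.val = 3 ∨ 4 ≤ j.val := by omega
    rcases hi with hi | hi | hi | hi | hi <;> rcases hj with hj | hj | hj | hj | hj <;>
      simp only [cwpU, cwpV, cwpX, cwpY, cyclePendantRel, hi, hj] <;>
      first
        | (norm_num [hs]; try omega); done
        | (simp only [if_neg (by omega : ¬ j.val = 0), if_neg (by omega : ¬ j.val = 1),
            if_neg (by omega : ¬ j.val = 2), if_neg (by omega : ¬ j.val = 3)];
           norm_num [hs]; try omega); done
        | (simp only [if_neg (by omega : ¬ i.val = 0), if_neg (by omega : ¬ i.val = 1),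
            if_neg (by omega : ¬ i.val = 2), if_neg (by omega : ¬ i.val = 3)];
           norm_num [hs]; try omega); done
        | (simp only [if_neg (by omega : ¬ i.val = 0), if_neg (by omega : ¬ i.val = 1),
            if_neg (by omega : ¬ i.val = 2), if_neg (by omega : ¬ i.val = 3),
            if_neg (by omega : ¬ j.val = 0), if_neg (by omega : ¬ j.val = 1),
            if_neg (by omega : ¬ j.val = 2), if_neg (by omega : ¬ j.val = 3),
            if_neg (by omega : ¬(i.val = 0 ∨ i.val = 2)),
            if_neg (by omega : ¬(j.val = 0 ∨ j.val = 2))];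
           norm_num; try omega); done

section dots
variable {n : ℕ} (s : ℝ)

lemma dot_uv : cwpU n ⬝ᵥ cwpV n = 0 := by
  apply Finset.sum_eq_zero
  intro i _
  simp only [cwpU, cwpV]
  by_cases h : i.val = 0
  · simp [h]
  · simp [h]

lemma dot_uy : cwpU n ⬝ᵥ cwpY n s = 0 := by
  apply Finset.sum_eq_zero
  intro i _
  simp only [cwpU, cwpY]
  by_cases h : i.val = 2
  · simp [h]
  · simp [h]

lemma dot_vx : cwpV n ⬝ᵥ cwpX n = 0 := by
  apply Finset.sum_eq_zero
  intro i _
  simp only [cwpV, cwpX]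
  by_cases h : i.val = 0
  · simp [h]
  · simp [h]

lemma dot_vy : cwpV n ⬝ᵥ cwpY n s = 0 := by
  apply Finset.sum_eq_zero
  intro i _
  simp only [cwpV, cwpY]
  by_cases h : i.val = 0
  · simp [h]
  · simp [h]

lemma dot_xy : cwpX n ⬝ᵥ cwpY n s = 0 := by
  apply Finset.sum_eq_zero
  intro i _
  simp only [cwpX, cwpY]
  by_cases h : i.val = 1
  · simp [h]
  · by_cases h3 : i.val = 3 <;> simp [h, h3]

lemma dot_ux (hn : 5 ≤ n) : cwpU n ⬝ᵥ cwpX n = 0 := by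
  have h1 : ∀ i : Fin n, cwpU n i * cwpX n i
      = (if i = (⟨1, by omega⟩ : Fin n) then (-1:ℝ) else 0)
        + (if i = (⟨3, by omega⟩ : Fin n) then (1:ℝ) else 0) := by
    intro i
    simp only [cwpU, cwpX, Fin.ext_iff]
    by_cases h1 : i.val = 1
    · simp [h1]
    · by_cases h3 : i.val = 3 <;> simp [h1, h3]
  rw [dotProduct, Finset.sum_congr rfl fun i _ => h1 i, Finset.sum_add_distrib]
  simp

lemma dot_uu (hn : 5 ≤ n) : cwpU n ⬝ᵥ cwpU n = (n : ℝ) - 2 := by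
  have h1 : ∀ i : Fin n, cwpU n i * cwpU n i
      = 1 - (if i = (⟨0, by omega⟩ : Fin n) then (1:ℝ) else 0)
        - (if i = (⟨2, by omega⟩ : Fin n) then (1:ℝ) else 0) := by
    intro i
    simp only [cwpU, Fin.ext_iff]
    by_cases h0 : i.val = 0
    · simp [h0]
    · by_cases h2 : i.val = 2 <;> simp [h0, h2]
  rw [dotProduct, Finset.sum_congr rfl fun i _ => h1 i]
  simp only [Finset.sum_sub_distrib]
  simp [Finset.card_univ]
  ring

lemma dot_vv (hn : 5 ≤ n) : cwpV n ⬝ᵥ cwpV n = 1 := by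
  have h1 : ∀ i : Fin n, cwpV n i * cwpV n i
      = (if i = (⟨0, by omega⟩ : Fin n) then (1:ℝ) else 0) := by
    intro i
    simp only [cwpV, Fin.ext_iff]
    by_cases h0 : i.val = 0 <;> simp [h0]
  rw [dotProduct, Finset.sum_congr rfl fun i _ => h1 i]
  simp

lemma dot_xx (hn : 5 ≤ n) : cwpX n ⬝ᵥ cwpX n = 2 := by
  have h1 : ∀ i : Fin n, cwpX n i * cwpX n i
      = (if i = (⟨1, by omega⟩ : Fin n) then (1:ℝ) else 0)
        + (if i = (⟨3, by omega⟩ : Fin n) then (1:ℝ) else 0) := by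
    intro i
    simp only [cwpX, Fin.ext_iff]
    by_cases h1 : i.val = 1
    · simp [h1]
    · by_cases h3 : i.val = 3 <;> simp [h1, h3]
  rw [dotProduct, Finset.sum_congr rfl fun i _ => h1 i, Finset.sum_add_distrib]
  norm_num

lemma dot_yy (hn : 5 ≤ n) : cwpY n s ⬝ᵥ cwpY n s = s * s := by
  have h1 : ∀ i : Fin n, cwpY n s i * cwpY n s i
      = (if i = (⟨2, by omega⟩ : Fin n) then s * s else 0) := by
    intro i
    simp only [cwpY, Fin.ext_iff]
    by_cases h2 : i.val = 2 <;> simp [h2]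
  rw [dotProduct, Finset.sum_congr rfl fun i _ => h1 i]
  simp

end dots

lemma cwpM_cube {n : ℕ} (hn : 5 ≤ n) {s : ℝ} (hss : s * s = ((n : ℝ) - 2) / 2) :
    cwpM n s * cwpM n s * cwpM n s = ((n : ℝ) - 2) • cwpM n s := by
  have huv : cwpU n ⬝ᵥ cwpV n = 0 := dot_uv
  have hvu : cwpV n ⬝ᵥ cwpU n = 0 := by rwa [dotProduct_comm]
  have hux : cwpU n ⬝ᵥ cwpX n = 0 := dot_ux hn
  have hxu : cwpX n ⬝ᵥ cwpU n = 0 := by rwa [dotProduct_comm]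
  have huy : cwpU n ⬝ᵥ cwpY n s = 0 := dot_uy s
  have hyu : cwpY n s ⬝ᵥ cwpU n = 0 := by rwa [dotProduct_comm]
  have hvx : cwpV n ⬝ᵥ cwpX n = 0 := dot_vx
  have hxv : cwpX n ⬝ᵥ cwpV n = 0 := by rwa [dotProduct_comm]
  have hvy : cwpV n ⬝ᵥ cwpY n s = 0 := dot_vy s
  have hyv : cwpY n s ⬝ᵥ cwpV n = 0 := by rwa [dotProduct_comm]
  have hxy : cwpX n ⬝ᵥ cwpY n s = 0 := dot_xy s
  have hyx : cwpY n s ⬝ᵥ cwpX n = 0 := by rwa [dotProduct_comm]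
  have huu : cwpU n ⬝ᵥ cwpU n = (n : ℝ) - 2 := dot_uu hn
  have hvv : cwpV n ⬝ᵥ cwpV n = 1 := dot_vv hn
  have hxx : cwpX n ⬝ᵥ cwpX n = 2 := dot_xx hn
  have hyy : cwpY n s ⬝ᵥ cwpY n s = ((n : ℝ) - 2) / 2 := by rw [dot_yy s hn, hss]
  simp only [cwpM, Matrix.add_mul, Matrix.mul_add, vmv_mul, huv, hvu, hux, hxu, huy, hyu,
    hvx, hxv, hvy, hyv, hxy, hyx, huu, hvv, hxx, hyy, zero_smul, one_smul, smul_add,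
    Matrix.smul_mul, Matrix.mul_smul, add_zero, zero_add, smul_smul]
  ring_nf
  module

lemma cwpM_numEig_le {n : ℕ} (hn : 5 ≤ n) {s : ℝ} (hss : s * s = ((n : ℝ) - 2) / 2) :
    numEig (cwpM n s) ≤ 3 := by
  haveI : Nonempty (Fin n) := ⟨⟨0, by omega⟩⟩
  set t : ℝ := Real.sqrt ((n : ℝ) - 2) with ht
  have ht2 : t * t = (n : ℝ) - 2 := Real.mul_self_sqrt (by
    have : (5:ℝ) ≤ (n:ℝ) := by exact_mod_cast hn
    linarith)
  have hsub : spectrum ℝ (cwpM n s) ⊆ {0, t, -t} := by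
    intro lam hlam
    have hcube := cwpM_cube hn hss
    set M := cwpM n s
    have haev : (Polynomial.aeval M) (Polynomial.X ^ 3
        - Polynomial.C ((n : ℝ) - 2) * Polynomial.X) = 0 := by
      rw [map_sub, Polynomial.aeval_X_pow, _root_.map_mul, Polynomial.aeval_C,
        Polynomial.aeval_X, ← Algebra.smul_def, pow_succ, pow_two, hcube, sub_self]
    have hmem := spectrum.subset_polynomial_aeval M
      (Polynomial.X ^ 3 - Polynomial.C ((n : ℝ) - 2) * Polynomial.X) ⟨lam, hlam, rfl⟩
    rw [haev, spectrum.zero_eq] at hmem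
    simp only [Set.mem_singleton_iff, Polynomial.eval_sub, Polynomial.eval_pow,
      Polynomial.eval_X, Polynomial.eval_mul, Polynomial.eval_C] at hmem
    have hfac : lam * ((lam - t) * (lam + t)) = 0 := by
      have h0 : lam ^ 3 - ((n:ℝ) - 2) * lam = 0 := hmem
      linear_combination h0 - lam * ht2
    rcases mul_eq_zero.mp hfac with h | h
    · exact Or.inl h
    rcases mul_eq_zero.mp h with h | h
    · exact Or.inr (Or.inl (by linarith))
    · exact Or.inr (Or.inr (by simp [Set.mem_singleton_iff]; linarith))
  calc numEig (cwpM n s) ≤ ({0, t, -t} : Set ℝ).ncard :=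
        Set.ncard_le_ncard hsub (Set.toFinite _)
    _ ≤ 3 := by
        refine le_trans (Set.ncard_insert_le _ _) ?_
        have := Set.ncard_insert_le t ({-t} : Set ℝ)
        simp only [Set.ncard_singleton] at this ⊢
        omega


theorem stmt19 (n : ℕ) (hn : 5 ≤ n) :
    qGraph (cycleWithPendants n) = 3 := by
  set s : ℝ := Real.sqrt (((n : ℝ) - 2) / 2) with hsdef
  have hn5 : (5 : ℝ) ≤ (n : ℝ) := by exact_mod_cast hn
  have hs0 : s ≠ 0 := ne_of_gt (Real.sqrt_pos.mpr (by linarith))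
  have hss : s * s = ((n : ℝ) - 2) / 2 := Real.mul_self_sqrt (by linarith)
  have hmem := cwpM_mem hn hs0
  have hle := cwpM_numEig_le hn hss
  have hge := lower_bound hn hmem
  have h3 : (3 : ℕ) ∈ numEig '' SMat (cycleWithPendants n) :=
    ⟨cwpM n s, hmem, le_antisymm hle hge⟩
  refine le_antisymm (Nat.sInf_le h3) (le_csInf ⟨3, h3⟩ ?_)
  rintro b ⟨A, hA, rfl⟩
  exact lower_bound hn hA
end
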